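/- Let d ≥ 1 and let N be a d-small FS^op-module. If λ is a partition of n and Hom_{S_n}(V_λ, N(n)) ≠ 0, then λ has at most d parts, i.e., ℓ(λ) ≤ d. -/

import Mathlib

open CategoryTheory

/-- An object of the category `FS`: a nonempty finite set. -/
structure FSObj : Type 1 where
  carrier : Type
  [fintype : Fintype carrier]
  [nonempty : Nonempty carrier]

attribute [instance] FSObj.fintype FSObj.nonempty

instance : CoeSort FSObj Type := ⟨FSObj.carrier⟩

/-- The category `FS` of nonempty finite sets with surjective maps. -/
instance : Category FSObj where
  Hom A B := {f : A → B // Function.Surjective f}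
  id A := ⟨id, Function.surjective_id⟩
  comp f g := ⟨g.1 ∘ f.1, g.2.comp f.2⟩

/-- The standard object `[n] = {1, …, n}` of `FS`, modeled as `Fin n`, for `n ≥ 1`. -/
def FSn (n : ℕ) [NeZero n] : FSObj := ⟨Fin n⟩

/-- An `FSᵒᵖ`-module: a contravariant functor from `FS` to complex vector spaces. -/
abbrev FSopModule : Type 1 := FSObjᵒᵖ ⥤ ModuleCat.{0} ℂ

/-- The value `N(n) := N([n])` of an `FSᵒᵖ`-module at `[n]`, as a representation of
the symmetric group `S_n = Aut([n])`. -/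
def FSopModule.val (N : FSopModule) (n : ℕ) [NeZero n] : ModuleCat ℂ :=
  N.obj (Opposite.op (FSn n))

/-- The dimension of `N([n])`, with the junk value `0` when `n = 0`. -/
noncomputable def FSopModule.dim (N : FSopModule) : ℕ → ℕ
  | 0 => 0
  | (n + 1) => Module.finrank ℂ (N.val (n + 1))

/-- The principal projective `FSᵒᵖ`-module at an object `A`, sending a finite set `E` to
the complex vector space with basis the set of surjections `E ↠ A`.  The principal
projective `P_m` of the paper is `PP (FSn m)`. -/
@[simps]
noncomputable def PP (A : FSObj) : FSopModule where
  obj E := ModuleCat.of ℂ ((E.unop ⟶ A) →₀ ℂ)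
  map {E E'} g := ModuleCat.ofHom (Finsupp.lmapDomain ℂ ℂ (fun f => g.unop ≫ f))
  map_id _ := ModuleCat.hom_ext (LinearMap.ext fun _ => Finsupp.mapDomain_id)
  map_comp g h := ModuleCat.hom_ext (LinearMap.ext fun _ =>
    (Finsupp.mapDomain_comp (f := fun f => g.unop ≫ f) (g := fun f => h.unop ≫ f)))

/-- The object `[m]` together with a positivity proof. -/
def finObj (m : ℕ) (h : 1 ≤ m) : FSObj :=
  { carrier := Fin m, nonempty := ⟨⟨0, h⟩⟩ }

/-- An `FSᵒᵖ`-module is finitely generated in degrees `≤ d` if it is the quotient of a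
finite direct sum of principal projectives `P_m` with `m ≤ d`; equivalently, if there is
a finite family of maps from such principal projectives whose images jointly span. -/
def FinGenLE (d : ℕ) (N : FSopModule) : Prop :=
  ∃ (k : ℕ) (m : Fin k → ℕ) (hm : ∀ i, 1 ≤ m i ∧ m i ≤ d)
    (T : ∀ i : Fin k, PP (finObj (m i) (hm i).1) ⟶ N),
    ∀ E : FSObjᵒᵖ, (⨆ i : Fin k, LinearMap.range ((T i).app E).hom) = ⊤

/-- An `FSᵒᵖ`-module is `d`-small if it is a subquotient of an `FSᵒᵖ`-module that is
finitely generated in degrees `≤ d`. -/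
def IsSmall (d : ℕ) (N : FSopModule) : Prop :=
  ∃ (M M₀ : FSopModule) (_ : FinGenLE d M) (ι : M₀ ⟶ M) (π : M₀ ⟶ N),
    (∀ E : FSObjᵒᵖ, Function.Injective (ι.app E)) ∧
    (∀ E : FSObjᵒᵖ, Function.Surjective (π.app E))
open Equiv

/-- Row index of the box numbered `i` in the canonical (row-by-row) filling of the Young
diagram with row lengths `L`. -/
def rowIdx : List ℕ → ℕ → ℕ
  | [], _ => 0
  | a :: L, i => if i < a then 0 else rowIdx L (i - a) + 1

/-- Column index of the box numbered `i` in the canonical (row-by-row) filling of the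
Young diagram with row lengths `L`. -/
def colIdx : List ℕ → ℕ → ℕ
  | [], i => i
  | a :: L, i => if i < a then i else colIdx L (i - a)

/-- The parts of a partition, sorted in weakly decreasing order. -/
def sortedParts {n : ℕ} (lam : n.Partition) : List ℕ :=
  (Multiset.sort lam.parts (· ≤ ·)).reverse

/-- The row of the entry `i` in the canonical tableau of shape `lam`. -/
def tabRow {n : ℕ} (lam : n.Partition) (i : Fin n) : ℕ := rowIdx (sortedParts lam) i.1

/-- The column of the entry `i` in the canonical tableau of shape `lam`. -/
def tabCol {n : ℕ} (lam : n.Partition) (i : Fin n) : ℕ := colIdx (sortedParts lam) i.1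

/-- The row group of the canonical tableau of shape `lam`: permutations preserving
each row. -/
def rowGroup {n : ℕ} (lam : n.Partition) : Finset (Perm (Fin n)) :=
  Finset.univ.filter fun σ => ∀ i, tabRow lam (σ i) = tabRow lam i

/-- The column group of the canonical tableau of shape `lam`: permutations preserving
each column. -/
def colGroup {n : ℕ} (lam : n.Partition) : Finset (Perm (Fin n)) :=
  Finset.univ.filter fun σ => ∀ i, tabCol lam (σ i) = tabCol lam i

/-- The Young symmetrizer of the canonical tableau of shape `lam`, namely
`e_λ = (∑_{q ∈ C_λ} sgn(q)·q) · (∑_{p ∈ R_λ} p)` in the group algebra `ℂ[S_n]`. -/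
noncomputable def youngSymmetrizer {n : ℕ} (lam : n.Partition) :
    MonoidAlgebra ℂ (Perm (Fin n)) :=
  (∑ σ ∈ colGroup lam, ((Perm.sign σ : ℤ) : ℂ) • MonoidAlgebra.of ℂ (Perm (Fin n)) σ) *
    (∑ σ ∈ rowGroup lam, MonoidAlgebra.of ℂ (Perm (Fin n)) σ)

/-- The Specht module `V_λ`, realized as the left ideal `ℂ[S_n]·e_λ` generated by the
Young symmetrizer, i.e. the range of right multiplication by `e_λ`. -/
noncomputable def SpechtSub {n : ℕ} (lam : n.Partition) :
    Submodule ℂ (MonoidAlgebra ℂ (Perm (Fin n))) :=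
  LinearMap.range (LinearMap.mulRight ℂ (youngSymmetrizer lam))

/-- The left action of `g ∈ S_n` on the Specht module `V_λ = ℂ[S_n]·e_λ`. -/
noncomputable def spechtSmul {n : ℕ} (lam : n.Partition) (g : Perm (Fin n))
    (x : SpechtSub lam) : SpechtSub lam :=
  ⟨MonoidAlgebra.of ℂ (Perm (Fin n)) g * x.1, by
    obtain ⟨b, hb⟩ := x.2
    exact ⟨MonoidAlgebra.of ℂ (Perm (Fin n)) g * b, by
      simp only [LinearMap.mulRight_apply] at hb ⊢
      rw [mul_assoc, hb]⟩⟩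

/-- The morphism `[n] ⟶ [n]` of `FS` corresponding to a permutation `g ∈ S_n`. -/
def permHom {n : ℕ} [NeZero n] (g : Perm (Fin n)) : FSn n ⟶ FSn n := ⟨g, g.surjective⟩

/-- The action of `S_n = Aut([n])` on the value `N(n)` of an `FSᵒᵖ`-module:
`g` acts as the structure map induced by `g⁻¹`. -/
noncomputable def permAction (N : FSopModule) (n : ℕ) [NeZero n] (g : Perm (Fin n)) :
    N.val n →ₗ[ℂ] N.val n :=
  (N.map (Quiver.Hom.op (permHom g⁻¹))).hom

/-- A linear map `V_λ → N(n)` is `S_n`-equivariant if it intertwines the left action of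
`S_n` on `V_λ = ℂ[S_n]·e_λ` with the action on `N(n)`. -/
def IsEquivariant {n : ℕ} [NeZero n] (lam : n.Partition) (N : FSopModule)
    (φ : SpechtSub lam →ₗ[ℂ] N.val n) : Prop :=
  ∀ (g : Perm (Fin n)) (x : SpechtSub lam),
    φ (spechtSmul lam g x) = permAction N n g (φ x)

/-- The space `Hom_{S_n}(V_λ, N(n))` of equivariant linear maps. -/
noncomputable def equivariantHom {n : ℕ} [NeZero n] (lam : n.Partition) (N : FSopModule) :
    Submodule ℂ ((SpechtSub lam) →ₗ[ℂ] N.val n) where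
  carrier := {φ | IsEquivariant lam N φ}
  add_mem' := by
    intro φ ψ hφ hψ g x
    simp [hφ g x, hψ g x]
  zero_mem' := by intro g x; simp
  smul_mem' := by
    intro c φ hφ g x
    simp [hφ g x]

/-! ### Auxiliary material for the proof -/

section AuxProof

open Equiv Finsupp MonoidAlgebra Finset

variable {n : ℕ} [NeZero n]

/-- The column antisymmetrizer `c_λ = ∑_{q ∈ C_λ} sgn(q)·q`. -/
noncomputable def cElt (lam : n.Partition) : MonoidAlgebra ℂ (Perm (Fin n)) :=
  ∑ σ ∈ colGroup lam, ((Perm.sign σ : ℤ) : ℂ) • MonoidAlgebra.of ℂ (Perm (Fin n)) σ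

lemma one_mem_colGroup (lam : n.Partition) : (1 : Perm (Fin n)) ∈ colGroup lam := by
  simp [colGroup]

lemma mul_mem_colGroup (lam : n.Partition) {p q : Perm (Fin n)}
    (hp : p ∈ colGroup lam) (hq : q ∈ colGroup lam) : p * q ∈ colGroup lam := by
  simp only [colGroup, Finset.mem_filter, Finset.mem_univ, true_and] at *
  intro i
  simpa [hq i] using hp (q i)

lemma inv_mem_colGroup (lam : n.Partition) {q : Perm (Fin n)}
    (hq : q ∈ colGroup lam) : q⁻¹ ∈ colGroup lam := by
  simp only [colGroup, Finset.mem_filter, Finset.mem_univ, true_and] at *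
  intro i
  conv_rhs => rw [← (by simp : q (q⁻¹ i) = i)]
  exact (hq (q⁻¹ i)).symm

lemma sg_mul (p q : Perm (Fin n)) :
    ((Perm.sign (p * q) : ℤ) : ℂ) = ((Perm.sign p : ℤ) : ℂ) * ((Perm.sign q : ℤ) : ℂ) := by
  rw [map_mul, Units.val_mul, Int.cast_mul]

lemma sg_mul_self (q : Perm (Fin n)) :
    ((Perm.sign q : ℤ) : ℂ) * ((Perm.sign q : ℤ) : ℂ) = 1 := by
  rcases Int.units_eq_one_or (Perm.sign q) with h | h <;> rw [h] <;> norm_num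

lemma cElt_mul (lam : n.Partition) (x : MonoidAlgebra ℂ (Perm (Fin n))) :
    cElt lam * x = ∑ q ∈ colGroup lam,
      ((Perm.sign q : ℤ) : ℂ) • (MonoidAlgebra.of ℂ (Perm (Fin n)) q * x) := by
  rw [cElt, Finset.sum_mul]
  simp only [smul_mul_assoc]

lemma of_mul_cElt (lam : n.Partition) {q : Perm (Fin n)} (hq : q ∈ colGroup lam) :
    MonoidAlgebra.of ℂ (Perm (Fin n)) q * cElt lam
      = ((Perm.sign q : ℤ) : ℂ) • cElt lam := by
  rw [cElt, Finset.mul_sum, Finset.smul_sum]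
  refine Finset.sum_bij' (fun σ _ => q * σ) (fun σ _ => q⁻¹ * σ)
    (fun σ hσ => mul_mem_colGroup lam hq hσ)
    (fun σ hσ => mul_mem_colGroup lam (inv_mem_colGroup lam hq) hσ)
    (fun σ hσ => by group) (fun σ hσ => by group) ?_
  intro σ hσ
  rw [mul_smul_comm, ← map_mul, smul_smul]
  congr 1
  rw [sg_mul, ← mul_assoc, sg_mul_self, one_mul]

lemma cElt_mul_cElt (lam : n.Partition) :
    cElt lam * cElt lam = ((colGroup lam).card : ℂ) • cElt lam := by
  rw [cElt_mul]
  have h : ∀ q ∈ colGroup lam,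
      ((Perm.sign q : ℤ) : ℂ) • (MonoidAlgebra.of ℂ (Perm (Fin n)) q * cElt lam)
        = cElt lam := by
    intro q hq
    rw [of_mul_cElt lam hq, smul_smul, sg_mul_self, one_smul]
  rw [Finset.sum_congr rfl h, Finset.sum_const, ← Nat.cast_smul_eq_nsmul ℂ]

lemma cElt_mul_young (lam : n.Partition) :
    cElt lam * youngSymmetrizer lam
      = ((colGroup lam).card : ℂ) • youngSymmetrizer lam := by
  have he : youngSymmetrizer lam = cElt lam *
      (∑ σ ∈ rowGroup lam, MonoidAlgebra.of ℂ (Perm (Fin n)) σ) := rfl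
  rw [he, ← mul_assoc, cElt_mul_cElt, smul_mul_assoc]

/-- The column antisymmetrizer as an operator on `N(n)`. -/
noncomputable def cOp (lam : n.Partition) (N : FSopModule) : N.val n →ₗ[ℂ] N.val n :=
  ∑ σ ∈ colGroup lam, ((Perm.sign σ : ℤ) : ℂ) • permAction N n σ

lemma permAction_naturality {X Y : FSopModule} (α : X ⟶ Y) (σ : Perm (Fin n))
    (v : X.val n) :
    permAction Y n σ (α.app (Opposite.op (FSn n)) v)
      = α.app (Opposite.op (FSn n)) (permAction X n σ v) := by
  have h := α.naturality (Quiver.Hom.op (permHom (n := n) σ⁻¹))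
  have h2 := congrArg (fun f => f.hom v) h
  simp only [ModuleCat.hom_comp, LinearMap.comp_apply] at h2
  exact h2.symm

lemma cOp_naturality (lam : n.Partition) {X Y : FSopModule} (α : X ⟶ Y) (v : X.val n) :
    cOp lam Y (α.app (Opposite.op (FSn n)) v)
      = α.app (Opposite.op (FSn n)) (cOp lam X v) := by
  simp only [cOp]
  erw [LinearMap.sum_apply, LinearMap.sum_apply, map_sum]
  refine Finset.sum_congr rfl fun σ _ => ?_
  erw [LinearMap.smul_apply, LinearMap.smul_apply, map_smul, permAction_naturality]
  rfl

/-! #### Column combinatorics -/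

lemma exists_colZero : ∀ (L : List ℕ), (∀ a ∈ L, 0 < a) →
    ∃ S : Finset ℕ, S.card = L.length ∧ ∀ i ∈ S, i < L.sum ∧ colIdx L i = 0
  | [], _ => ⟨∅, rfl, by simp⟩
  | a :: L, h => by
    obtain ⟨S, hcard, hS⟩ := exists_colZero L (fun b hb => h b (List.mem_cons_of_mem a hb))
    have ha : 0 < a := h a List.mem_cons_self
    refine ⟨insert 0 (S.image (· + a)), ?_, ?_⟩
    · rw [Finset.card_insert_of_notMem, Finset.card_image_of_injective _
        (add_left_injective a), hcard, List.length_cons]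
      intro hmem
      obtain ⟨j, _, hj0⟩ := Finset.mem_image.1 hmem
      omega
    · intro i hi
      rcases Finset.mem_insert.1 hi with rfl | hi
      · refine ⟨by simp [List.sum_cons]; omega, ?_⟩
        simp [colIdx, ha]
      · obtain ⟨j, hj, rfl⟩ := Finset.mem_image.1 hi
        obtain ⟨hjlt, hj0⟩ := hS j hj
        refine ⟨by simp [List.sum_cons]; omega, ?_⟩
        show colIdx (a :: L) (j + a) = 0
        rw [colIdx, if_neg (by omega)]
        simpa using hj0

lemma sortedParts_pos (lam : n.Partition) {a : ℕ} (ha : a ∈ sortedParts lam) : 0 < a :=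
  lam.parts_pos (by simpa [sortedParts, Multiset.mem_sort] using ha)

lemma sortedParts_sum (lam : n.Partition) : (sortedParts lam).sum = n := by
  have h := congrArg Multiset.sum (Multiset.sort_eq (s := lam.parts) (r := (· ≤ ·)))
  rw [Multiset.sum_coe] at h
  rw [sortedParts, List.sum_reverse, h, lam.parts_sum]

lemma sortedParts_length (lam : n.Partition) :
    (sortedParts lam).length = Multiset.card lam.parts := by
  rw [sortedParts, List.length_reverse, Multiset.length_sort]

lemma card_colZero (lam : n.Partition) :
    Multiset.card lam.parts
      ≤ (Finset.univ.filter fun i : Fin n => tabCol lam i = 0).card := by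
  obtain ⟨S, hcard, hS⟩ := exists_colZero (sortedParts lam) (fun a ha => sortedParts_pos lam ha)
  rw [← sortedParts_length lam, ← hcard]
  have hn : 0 < n := Nat.pos_of_ne_zero (NeZero.ne n)
  apply Finset.card_le_card_of_injOn (fun i => (⟨i % n, Nat.mod_lt _ hn⟩ : Fin n))
  · intro i hi
    obtain ⟨hilt, hi0⟩ := hS i hi
    have hin : i < n := by rw [← sortedParts_sum lam]; exact hilt
    have hmod : i % n = i := Nat.mod_eq_of_lt hin
    simp only [Finset.coe_filter, Finset.mem_univ, true_and, Set.mem_setOf_eq]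
    show colIdx (sortedParts lam) (i % n) = 0
    rw [hmod]; exact hi0
  · intro i hi j hj hij
    obtain ⟨hilt, _⟩ := hS i hi
    obtain ⟨hjlt, _⟩ := hS j hj
    have hin : i < n := by rw [← sortedParts_sum lam]; exact hilt
    have hjn : j < n := by rw [← sortedParts_sum lam]; exact hjlt
    have := congrArg Fin.val hij
    simpa [Nat.mod_eq_of_lt hin, Nat.mod_eq_of_lt hjn] using this

/-! #### Killing the principal projectives -/

lemma cOp_PP_single (lam : n.Partition) (m : ℕ) (hm1 : 1 ≤ m)
    (hcard : m < Multiset.card lam.parts) (f : FSn n ⟶ finObj m hm1) (z : ℂ) :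
    cOp lam (PP (finObj m hm1)) (Finsupp.single f z) = 0 := by
  classical
  -- compute the action on a basis element
  have hsum : ∀ q : Perm (Fin n),
      permAction (PP (finObj m hm1)) n q (Finsupp.single f z)
        = Finsupp.single (permHom q⁻¹ ≫ f) z := by
    intro q
    show ((PP (finObj m hm1)).map (Quiver.Hom.op (permHom q⁻¹))) (Finsupp.single f z) = _
    simp only [PP_map, Finsupp.lmapDomain_apply, Quiver.Hom.unop_op]
    exact Finsupp.mapDomain_single
  rw [cOp]; erw [LinearMap.sum_apply]
  simp only [LinearMap.smul_apply, hsum]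
  -- pigeonhole: two entries in column 0 with the same image under f
  have hTcard : m < (Finset.univ.filter fun i : Fin n => tabCol lam i = 0).card :=
    lt_of_lt_of_le hcard (card_colZero lam)
  have hmaps : ∀ a ∈ (Finset.univ.filter fun i : Fin n => tabCol lam i = 0),
      f.1 a ∈ (Finset.univ : Finset (Fin m)) := fun a _ => Finset.mem_univ _
  have hcm : (Finset.univ : Finset (finObj m hm1).carrier).card
      < (Finset.univ.filter fun i : Fin n => tabCol lam i = 0).card := by
    have hu : (Finset.univ : Finset (finObj m hm1).carrier).card = m := by
      show (Finset.univ : Finset (Fin m)).card = m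
      simp
    rw [hu]; exact hTcard
  obtain ⟨i, hi, j, hj, hij, hfij⟩ :=
    Finset.exists_ne_map_eq_of_card_lt_of_maps_to hcm hmaps
  have hi0 : tabCol lam i = 0 := (Finset.mem_filter.1 hi).2
  have hj0 : tabCol lam j = 0 := (Finset.mem_filter.1 hj).2
  set t : Perm (Fin n) := Equiv.swap i j with ht
  have htmem : t ∈ colGroup lam := by
    simp only [colGroup, Finset.mem_filter, Finset.mem_univ, true_and]
    intro k
    rcases eq_or_ne k i with rfl | hki
    · rw [ht, Equiv.swap_apply_left, hj0, hi0]
    rcases eq_or_ne k j with rfl | hkj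
    · rw [ht, Equiv.swap_apply_right, hj0, hi0]
    · rw [ht, Equiv.swap_apply_of_ne_of_ne hki hkj]
  have htf : ∀ y : Fin n, f.1 (t y) = f.1 y := by
    intro y
    rcases eq_or_ne y i with rfl | hyi
    · rw [ht, Equiv.swap_apply_left, ← hfij]
    rcases eq_or_ne y j with rfl | hyj
    · rw [ht, Equiv.swap_apply_right, hfij]
    · rw [ht, Equiv.swap_apply_of_ne_of_ne hyi hyj]
  have hkey : ∀ q : Perm (Fin n), permHom (q * t)⁻¹ ≫ f = permHom q⁻¹ ≫ f := by
    intro q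
    apply Subtype.ext
    funext x
    show f.1 ((q * t)⁻¹ x) = f.1 (q⁻¹ x)
    rw [mul_inv_rev]
    have : t⁻¹ = t := by rw [ht, Equiv.swap_inv]
    erw [Equiv.Perm.mul_apply, this, htf]
  have hne : t ≠ 1 := by
    intro h1
    have : t i = i := by rw [h1]; rfl
    rw [ht, Equiv.swap_apply_left] at this
    exact hij this.symm
  refine Finset.sum_involution (fun q _ => q * t) ?_ ?_ ?_ ?_
  · intro q hq
    erw [LinearMap.smul_apply, LinearMap.smul_apply, hsum, hsum]
    show ((Perm.sign q : ℤ) : ℂ) • Finsupp.single (permHom q⁻¹ ≫ f) z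
        + ((Perm.sign (q * t) : ℤ) : ℂ) • Finsupp.single (permHom (q * t)⁻¹ ≫ f) z = 0
    rw [hkey, sg_mul]
    have hst : ((Perm.sign t : ℤ) : ℂ) = -1 := by
      rw [ht, Equiv.Perm.sign_swap hij]; norm_num
    rw [hst, mul_neg_one, neg_smul, add_neg_cancel]
  · intro q _ _ heq
    exact hne (mul_left_cancel (a := q) (show q * t = q * 1 by rw [mul_one]; exact heq))
  · exact fun q hq => mul_mem_colGroup lam hq htmem
  · intro q _
    show q * t * t = q
    have htt : t * t = 1 := by rw [ht, Equiv.swap_mul_self]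
    rw [mul_assoc, htt, mul_one]

lemma cOp_PP_zero (lam : n.Partition) (m : ℕ) (hm1 : 1 ≤ m)
    (hcard : m < Multiset.card lam.parts) (v : (PP (finObj m hm1)).val n) :
    cOp lam (PP (finObj m hm1)) v = 0 := by
  have hv : ∀ w : ((FSn n ⟶ finObj m hm1) →₀ ℂ), cOp lam (PP (finObj m hm1)) w = 0 := by
    intro w
    induction w using Finsupp.induction_linear with
    | zero => exact map_zero _
    | add a b ha hb => erw [map_add, ha, hb, add_zero]
    | single g z => exact cOp_PP_single lam m hm1 hcard g z
  exact hv v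

end AuxProof

/-- if `N` is a `d`-small `FSᵒᵖ`-module, `λ ⊢ n`, and
`Hom_{S_n}(V_λ, N(n)) ≠ 0`, then `λ` has at most `d` parts. -/
theorem parts_le_of_equivariantHom_ne_zero (d : ℕ) (hd : 1 ≤ d) (N : FSopModule)
    (hN : IsSmall d N) (n : ℕ) [NeZero n] (lam : n.Partition)
    (h : ∃ φ ∈ equivariantHom lam N, φ ≠ 0) :
    Multiset.card lam.parts ≤ d := by
  classical
  by_contra hcon
  push_neg at hcon
  obtain ⟨φ, hφmem, hne⟩ := h
  have hφ : IsEquivariant lam N φ := hφmem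
  obtain ⟨M, M₀, hMfg, ι, π, hι, hπ⟩ := hN
  obtain ⟨k, m, hm, T, hT⟩ := hMfg
  -- the column antisymmetrizer kills M(n)
  have hM : ∀ u : M.val n, cOp lam M u = 0 := by
    intro u
    have hu : u ∈ ⨆ i : Fin k, LinearMap.range ((T i).app (Opposite.op (FSn n))).hom := by
      rw [hT]; exact Submodule.mem_top (R := ℂ) (M := M.obj (Opposite.op (FSn n)))
    refine Submodule.iSup_induction (motive := fun w => cOp lam M w = 0) _ hu ?_ (map_zero (cOp lam M)) ?_
    · rintro i x ⟨y, rfl⟩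
      erw [cOp_naturality, cOp_PP_zero lam (m i) (hm i).1 (lt_of_le_of_lt (hm i).2 hcon),
        map_zero]
      rfl
    · intro x y hx hy
      rw [map_add, hx, hy, add_zero]
  -- hence it kills N(n)
  have hNk : ∀ v : N.val n, cOp lam N v = 0 := by
    intro v
    obtain ⟨w, rfl⟩ := hπ (Opposite.op (FSn n)) v
    erw [cOp_naturality]
    have h0 : cOp lam M₀ w = 0 := by
      apply hι (Opposite.op (FSn n))
      erw [map_zero, ← cOp_naturality]
      exact hM _
    erw [h0, map_zero]
    rfl
  -- the Young symmetrizer as an element of the Specht module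
  have hemem : youngSymmetrizer lam ∈ SpechtSub lam :=
    ⟨1, one_mul (youngSymmetrizer lam)⟩
  set eb : SpechtSub lam := ⟨youngSymmetrizer lam, hemem⟩ with hebdef
  have hcmem : cElt lam * youngSymmetrizer lam ∈ SpechtSub lam := by
    rw [cElt_mul_young lam]
    exact Submodule.smul_mem _ _ hemem
  -- `c · e` as a sum of group translates of `e`
  have hdecomp : (⟨cElt lam * youngSymmetrizer lam, hcmem⟩ : SpechtSub lam)
      = ∑ q ∈ colGroup lam, ((Equiv.Perm.sign q : ℤ) : ℂ) • spechtSmul lam q eb := by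
    apply Subtype.ext
    rw [Submodule.coe_sum]
    show cElt lam * youngSymmetrizer lam = _
    rw [cElt_mul lam (youngSymmetrizer lam)]
    rfl
  have hkey : (((colGroup lam).card : ℂ)) • φ eb = 0 := by
    have h1 : (((colGroup lam).card : ℂ)) • eb
        = (⟨cElt lam * youngSymmetrizer lam, hcmem⟩ : SpechtSub lam) := by
      apply Subtype.ext
      show (((colGroup lam).card : ℂ)) • youngSymmetrizer lam
          = cElt lam * youngSymmetrizer lam
      rw [cElt_mul_young]
    rw [← map_smul, h1, hdecomp, map_sum]
    have h2 : ∀ q ∈ colGroup lam,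
        φ (((Equiv.Perm.sign q : ℤ) : ℂ) • spechtSmul lam q eb)
          = ((Equiv.Perm.sign q : ℤ) : ℂ) • permAction N n q (φ eb) := by
      intro q _
      rw [map_smul, hφ q eb]
    rw [Finset.sum_congr rfl h2]
    have h3 := hNk (φ eb)
    rw [cOp, LinearMap.sum_apply] at h3
    simpa using h3
  have hcards : (((colGroup lam).card : ℂ)) ≠ 0 :=
    Nat.cast_ne_zero.2 (Finset.card_ne_zero_of_mem (one_mem_colGroup lam))
  have heb0 : φ eb = 0 := by
    rcases smul_eq_zero.1 hkey with h | h
    · exact absurd h hcards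
    · exact h
  -- conclude `φ = 0`, contradicting `hne`
  apply hne
  apply LinearMap.ext
  intro x
  rw [LinearMap.zero_apply]
  obtain ⟨b, hb⟩ := x.2
  have hx : x = ∑ g ∈ b.coeff.support, b.coeff g • spechtSmul lam g eb := by
    apply Subtype.ext
    rw [Submodule.coe_sum]
    show (x : MonoidAlgebra ℂ (Equiv.Perm (Fin n))) = _
    rw [← hb, LinearMap.mulRight_apply]
    conv_lhs => rw [← MonoidAlgebra.sum_coeff_single b]
    rw [show b.coeff.sum MonoidAlgebra.single
        = ∑ g ∈ b.coeff.support, MonoidAlgebra.single g (b.coeff g) from rfl, Finset.sum_mul]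
    refine Finset.sum_congr rfl fun g _ => ?_
    have hsg : MonoidAlgebra.single g (b.coeff g) * youngSymmetrizer lam
        = b.coeff g • (MonoidAlgebra.of ℂ (Equiv.Perm (Fin n)) g * youngSymmetrizer lam) := by
      rw [show MonoidAlgebra.single g (b.coeff g)
          = b.coeff g • MonoidAlgebra.of ℂ (Equiv.Perm (Fin n)) g from by
        rw [MonoidAlgebra.of_apply, MonoidAlgebra.smul_single', mul_one],
        smul_mul_assoc]
    rw [hsg]
    rfl
  rw [hx, map_sum]
  refine Finset.sum_eq_zero fun g _ => ?_
  rw [map_smul, hφ g eb, heb0, map_zero, smul_zero]
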